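/- Fix a finite universe X, a database D ∈ ℝ^X, and α > 0. Suppose D^1 = 0 and for each t, Q^t ∈ [0,1]^X is a linear query with |Q^t(D) - Q^t(D^t)| ≥ α, and D^{t+1} = D^t - sign(Q^t(D^t) - Q^t(D))·(α/|X|)·Q^t. Then the number of steps C in any such sequence satisfies C ≤ ‖D‖₂²·|X|/α². -/

import Mathlib

open BigOperators

/-- The Frieze/Kannan update rule is a `B(α)`-iterative database construction
with `B(α) = ‖D‖₂² |X| / α²`: any sequence of updates driven by
`α`-distinguishing linear queries has length at most `‖D‖₂² |X| / α²`. -/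
theorem friezeKannan_IDC_bound
    {X : Type*} [Fintype X] [Nonempty X]
    (D : X → ℝ) (α : ℝ) (hα : 0 < α) (C : ℕ)
    (Dseq : ℕ → X → ℝ) (Q : ℕ → X → ℝ)
    (hstart : Dseq 0 = 0)
    (hQrange : ∀ t < C, ∀ i, Q t i ∈ Set.Icc (0 : ℝ) 1)
    (hdist : ∀ t < C, α ≤ |∑ i, Q t i * D i - ∑ i, Q t i * Dseq t i|)
    (hupd : ∀ t < C, Dseq (t + 1) =
      fun i => Dseq t i -
        Real.sign (∑ j, Q t j * Dseq t j - ∑ j, Q t j * D j) *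
          (α / (Fintype.card X)) * Q t i) :
    (C : ℝ) ≤ (∑ i, D i ^ 2) * (Fintype.card X) / α ^ 2 := by
  set n : ℝ := (Fintype.card X : ℝ) with hn
  have hn0 : 0 < n := by rw [hn]; exact_mod_cast Fintype.card_pos
  set Φ : ℕ → ℝ := fun t => ∑ i, (D i - Dseq t i) ^ 2 with hΦ
  set η : ℝ := α / n with hη
  have hη0 : 0 < η := div_pos hα hn0
  have key : ∀ t < C, Φ (t + 1) ≤ Φ t - α ^ 2 / n := by
    intro t ht
    set x : ℝ := ∑ j, Q t j * Dseq t j - ∑ j, Q t j * D j with hx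
    set s : ℝ := Real.sign x with hs
    have habs : α ≤ |x| := by
      have := hdist t ht
      rwa [← abs_neg, neg_sub] at this
    have hxne : x ≠ 0 := by
      intro h
      rw [h, abs_zero] at habs
      linarith
    have hsx : s * x = |x| := by
      rcases lt_or_gt_of_ne hxne with h | h
      · rw [hs, Real.sign_of_neg h, abs_of_neg h]; ring
      · rw [hs, Real.sign_of_pos h, abs_of_pos h]; ring
    have hs2 : s ^ 2 = 1 := by
      rcases lt_or_gt_of_ne hxne with h | h
      · rw [hs, Real.sign_of_neg h]; norm_num
      · rw [hs, Real.sign_of_pos h]; norm_num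
    have hupd' := hupd t ht
    have hptwise : ∀ i : X, (D i - Dseq (t + 1) i) ^ 2 =
        (D i - Dseq t i) ^ 2 - 2 * η * (s * (Q t i * Dseq t i - Q t i * D i))
          + s ^ 2 * η ^ 2 * Q t i ^ 2 := by
      intro i
      rw [hupd']
      simp only []
      rw [← hx, ← hs]
      ring
    have hexp : Φ (t + 1) = Φ t - 2 * η * (s * x) + s ^ 2 * η ^ 2 * ∑ i, Q t i ^ 2 := by
      calc Φ (t + 1) = ∑ i, ((D i - Dseq t i) ^ 2
            - 2 * η * (s * (Q t i * Dseq t i - Q t i * D i))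
            + s ^ 2 * η ^ 2 * Q t i ^ 2) :=
            Finset.sum_congr rfl (fun i _ => hptwise i)
        _ = Φ t - 2 * η * (s * x) + s ^ 2 * η ^ 2 * ∑ i, Q t i ^ 2 := by
            rw [Finset.sum_add_distrib, Finset.sum_sub_distrib, ← Finset.mul_sum,
              ← Finset.mul_sum]
            congr 2
            · rw [hx, ← Finset.sum_sub_distrib, Finset.mul_sum]
            · rw [Finset.mul_sum]
    have hQsum : ∑ i, Q t i ^ 2 ≤ n := by
      have : ∑ i, Q t i ^ 2 ≤ ∑ _i : X, (1 : ℝ) := by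
        apply Finset.sum_le_sum
        intro i _
        obtain ⟨h0, h1⟩ := hQrange t ht i
        nlinarith
      simpa [hn] using this
    have hsxα : α ≤ s * x := by rw [hsx]; exact habs
    have hηα : η * α = α ^ 2 / n := by rw [hη]; ring
    have hηn : η ^ 2 * n = α ^ 2 / n := by
      rw [hη]; field_simp
    calc Φ (t + 1) = Φ t - 2 * η * (s * x) + s ^ 2 * η ^ 2 * ∑ i, Q t i ^ 2 := hexp
      _ ≤ Φ t - 2 * η * (s * x) + η ^ 2 * n := by
          rw [hs2, one_mul]
          have := mul_le_mul_of_nonneg_left hQsum (le_of_lt (pow_pos hη0 2))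
          linarith
      _ ≤ Φ t - α ^ 2 / n := by
          have h2 : η * α ≤ η * (s * x) :=
            mul_le_mul_of_nonneg_left hsxα (le_of_lt hη0)
          rw [hηα] at h2
          linarith [hηn]
  have pot : ∀ t ≤ C, Φ t + t * (α ^ 2 / n) ≤ Φ 0 := by
    intro t
    induction t with
    | zero => intro _; simp
    | succ k ih =>
      intro hkc
      have hk : k < C := Nat.lt_of_succ_le hkc
      have h1 := key k hk
      have h2 := ih (le_of_lt hk)
      push_cast
      nlinarith
  have hΦ0 : Φ 0 = ∑ i, D i ^ 2 := by simp [hΦ, hstart]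
  have hΦC : 0 ≤ Φ C := Finset.sum_nonneg (fun i _ => sq_nonneg _)
  have hmain : (C : ℝ) * (α ^ 2 / n) ≤ ∑ i, D i ^ 2 := by
    have := pot C le_rfl
    rw [hΦ0] at this
    linarith
  rw [le_div_iff₀ (pow_pos hα 2)]
  have hcancel : α ^ 2 / n * n = α ^ 2 := div_mul_cancel₀ _ (ne_of_gt hn0)
  nlinarith [mul_le_mul_of_nonneg_right hmain (le_of_lt hn0)]
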